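/- arXiv:1305.2841 — 3 statements merged into one kernel-verified Lean document; each statement's English description precedes it below -/
import Mathlib

section
/- Let R be a commutative ring, α, β ∈ R, and define gₙ, hₙ ∈ R[t] by g₀ = 0, h₀ = 1, g_{n+1} = α t gₙ² + hₙ², h_{n+1} = β t gₙ² + hₙ². Then g₁ = h₁ = 1, and for every n ≥ 2: gₙ has degree ≤ 2^{n−1} − 1 with coefficient of t^{2^{n−1}−1} equal to α^{2^{n−1}−1}, and hₙ has degree ≤ 2^{n−1} − 1 with coefficient of t^{2^{n−1}−1} equal to β·α^{2^{n−1}−2}. -/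
open Polynomial

lemma step_lem {R : Type*} [CommRing R] (γ : R) (p q : Polynomial R) (d : ℕ)
    (hp : p.natDegree ≤ d) (hq : q.natDegree ≤ d) :
    (C γ * X * p ^ 2 + q ^ 2).natDegree ≤ 2 * d + 1 ∧
    (C γ * X * p ^ 2 + q ^ 2).coeff (2 * d + 1) = γ * (p.coeff d) ^ 2 := by
  have hpd : (p ^ 2).natDegree ≤ 2 * d :=
    (natDegree_pow_le).trans (by omega)
  have hqd : (q ^ 2).natDegree ≤ 2 * d :=
    (natDegree_pow_le).trans (by omega)
  constructor
  · refine (natDegree_add_le _ _).trans (max_le ?_ (by omega))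
    refine (natDegree_mul_le).trans ?_
    have : (C γ * X).natDegree ≤ 1 := (natDegree_mul_le).trans (by simp [natDegree_X_le])
    omega
  · rw [coeff_add, mul_assoc, coeff_C_mul, coeff_X_mul,
      coeff_eq_zero_of_natDegree_lt (by omega : (q^2).natDegree < 2*d+1)]
    have := coeff_pow_of_natDegree_le (p := p) (m := 2) (n := d) hp
    rw [this]; ring

/-- over a commutative ring R with α, β ∈ R, define gₙ, hₙ ∈ R[t] by
g₀ = 0, h₀ = 1, g_{n+1} = α t gₙ² + hₙ², h_{n+1} = β t gₙ² + hₙ².  Then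
g₁ = h₁ = 1, and for every n ≥ 2: gₙ has degree ≤ 2^{n−1} − 1 with coefficient of
t^{2^{n−1}−1} equal to α^{2^{n−1}−1}, and hₙ has degree ≤ 2^{n−1} − 1 with
coefficient of t^{2^{n−1}−1} equal to β·α^{2^{n−1}−2}. -/
theorem stmt_10 (R : Type*) [CommRing R] (α β : R) (g h : ℕ → Polynomial R)
    (hg0 : g 0 = 0) (hh0 : h 0 = 1)
    (hgrec : ∀ n, g (n + 1) = Polynomial.C α * Polynomial.X * (g n) ^ 2 + (h n) ^ 2)
    (hhrec : ∀ n, h (n + 1) = Polynomial.C β * Polynomial.X * (g n) ^ 2 + (h n) ^ 2) :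
    g 1 = 1 ∧ h 1 = 1 ∧
    ∀ n, 2 ≤ n →
      ((g n).natDegree ≤ 2 ^ (n - 1) - 1 ∧
       (g n).coeff (2 ^ (n - 1) - 1) = α ^ (2 ^ (n - 1) - 1) ∧
       (h n).natDegree ≤ 2 ^ (n - 1) - 1 ∧
       (h n).coeff (2 ^ (n - 1) - 1) = β * α ^ (2 ^ (n - 1) - 2)) := by
  have hg1 : g 1 = 1 := by rw [hgrec, hg0, hh0]; ring
  have hh1 : h 1 = 1 := by rw [hhrec, hg0, hh0]; ring
  refine ⟨hg1, hh1, ?_⟩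
  intro n hn
  induction n, hn using Nat.le_induction with
  | base =>
    have sg := step_lem α (g 1) (h 1) 0 (by simp [hg1]) (by simp [hh1])
    have sh := step_lem β (g 1) (h 1) 0 (by simp [hg1]) (by simp [hh1])
    rw [← hgrec] at sg; rw [← hhrec] at sh
    simp only [hg1, coeff_one] at sg sh
    norm_num at sg sh ⊢
    exact ⟨sg.1, sg.2, sh.1, sh.2⟩
  | succ n hn ih =>
    obtain ⟨dg, cg, dh, ch⟩ := ih
    set d := 2 ^ (n - 1) - 1 with hd
    have h2 : 2 ≤ 2 ^ (n - 1) := by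
      calc 2 = 2 ^ 1 := rfl
      _ ≤ 2 ^ (n - 1) := Nat.pow_le_pow_right (by norm_num) (by omega)
    have hd' : 2 ^ (n + 1 - 1) - 1 = 2 * d + 1 := by
      have : 2 ^ (n + 1 - 1) = 2 * 2 ^ (n - 1) := by
        rw [← pow_succ']; congr 1; omega
      omega
    have hd'' : 2 ^ (n + 1 - 1) - 2 = 2 * d := by
      have : 2 ^ (n + 1 - 1) = 2 * 2 ^ (n - 1) := by
        rw [← pow_succ']; congr 1; omega
      omega
    have sg := step_lem α (g n) (h n) d dg dh
    have sh := step_lem β (g n) (h n) d dg dh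
    rw [← hgrec] at sg; rw [← hhrec] at sh
    rw [hd', hd'', cg] at *
    refine ⟨sg.1, ?_, sh.1, ?_⟩
    · rw [sg.2, ← pow_mul, Nat.mul_comm d 2]; exact (pow_succ' α (2*d)).symm
    · rw [sh.2, ← pow_mul, Nat.mul_comm]
end

section
/- Let K be a field of characteristic ≠ 2 and f: P¹_K → P¹_K a quadratic morphism with critical point 0, such that f(−x) = f(x) and 0 has finite forward orbit under f. Then there exist integers k > ℓ > 0 with f^k(0) = −f^ℓ(0). -/
/-- The automorphism `x ↦ −x` of `P¹ = Option K` (`none` = `∞`). -/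
def negMap {K : Type*} [Field K] : Option K → Option K
  | none => none
  | some x => some (-x)

/-- let K be a field of characteristic ≠ 2 and f a quadratic morphism
on P¹_K with critical point 0, such that f(−x) = f(x) (f(R) = f(R') implies
R' = ±R, being a degree-2 covering with covering involution x ↦ −x) and 0 has
finite forward orbit under f.  Then there exist integers k > ℓ > 0 with
f^k(0) = −f^ℓ(0). -/
theorem stmt_12 (K : Type*) [Field K] (hchar : ringChar K ≠ 2)
    (f : Option K → Option K)
    (heven : ∀ z, f (negMap z) = f z)
    (hram : ∀ z w, f z = f w → z = w ∨ z = negMap w)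
    (hcrit0 : f ⁻¹' {f (some 0)} = {some 0})
    (hfin : Set.Finite {z | ∃ n, f^[n] (some 0) = z}) :
    ∃ k ℓ, 0 < ℓ ∧ ℓ < k ∧ f^[k] (some 0) = negMap (f^[ℓ] (some 0)) := by
  classical
  by_cases hper : ∃ n, 0 < n ∧ f^[n] (some 0) = some 0
  · obtain ⟨n, hn, hfn⟩ := hper
    refine ⟨2 * n, n, hn, by omega, ?_⟩
    rw [two_mul, Function.iterate_add_apply, hfn, hfn]
    simp [negMap]
  · push_neg at hper
    have hP : ∃ i, ∃ j, i < j ∧ f^[i] (some 0) = f^[j] (some 0) := by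
      haveI := hfin.to_subtype
      obtain ⟨m, n, hmn, heq⟩ := Finite.exists_ne_map_eq_of_infinite
        (fun n : ℕ => (⟨f^[n] (some 0), ⟨n, rfl⟩⟩ :
          {z | ∃ n, f^[n] (some 0) = z}))
      rcases lt_or_gt_of_ne hmn with h | h
      · exact ⟨m, n, h, congrArg Subtype.val heq⟩
      · exact ⟨n, m, h, (congrArg Subtype.val heq).symm⟩
    obtain ⟨j, hij, hfij⟩ := Nat.find_spec hP
    set i := Nat.find hP with hi_def
    have hi1 : 1 ≤ i := by
      rcases Nat.eq_zero_or_pos i with h0 | h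
      · exfalso
        rw [h0, Function.iterate_zero_apply] at hfij
        exact hper j (h0 ▸ hij) hfij.symm
      · exact h
    obtain ⟨a, ha⟩ : ∃ a, i = a + 1 := ⟨i - 1, by omega⟩
    obtain ⟨b, hb⟩ : ∃ b, j = b + 1 := ⟨j - 1, by omega⟩
    rw [ha, hb, Function.iterate_succ_apply', Function.iterate_succ_apply'] at hfij
    rcases hram _ _ hfij.symm with heq2 | hneg
    · exfalso
      exact Nat.find_min hP (show a < i by omega) ⟨b, by omega, heq2.symm⟩
    · rcases Nat.eq_zero_or_pos a with ha0 | hapos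
      · exfalso
        rw [ha0] at hneg
        simp only [Function.iterate_zero_apply, negMap, neg_zero] at hneg
        exact hper b (by omega) hneg
      · exact ⟨b, a, hapos, by omega, hneg⟩
end

section
/- Let T be a finite tree and σ an automorphism with σ² = id fixing at least one vertex. Define the quotient graph T/⟨σ⟩ with vertex set the σ-orbits of vertices, where orbits {t, σ(t)} and {t', σ(t')} are joined by an edge iff t is adjacent to t' or to σ(t') in T. Then T/⟨σ⟩ is a tree. -/
/-- The setoid on vertices whose classes are the orbits {v, σ v} of an
involution σ. -/
def orbSetoid {V : Type*} (σ : V → V) (h : ∀ v, σ (σ v) = v) : Setoid V :=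
  ⟨fun v w => w = v ∨ w = σ v, by
    constructor
    · intro v; exact Or.inl rfl
    · intro v w hw
      rcases hw with h1 | h1
      · exact Or.inl h1.symm
      · subst h1; exact Or.inr (h v).symm
    · intro u v w h1 h2
      rcases h1 with h1 | h1 <;> rcases h2 with h2 | h2 <;> subst h1 <;> subst h2
      · exact Or.inl rfl
      · exact Or.inr rfl
      · exact Or.inr rfl
      · exact Or.inl (h u)⟩

/-- The quotient graph T/⟨σ⟩: vertices are the σ-orbits of vertices of T, and two
distinct orbits {t, σ(t)} and {t', σ(t')} are joined by an edge iff some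
representative of the first is adjacent in T to some representative of the second
(equivalently, t is adjacent to t' or to σ(t')). -/
def quotGraph {V : Type*} (G : SimpleGraph V) (σ : V → V) (h : ∀ v, σ (σ v) = v) :
    SimpleGraph (Quotient (orbSetoid σ h)) where
  Adj a b := a ≠ b ∧ ∃ v w : V, Quotient.mk (orbSetoid σ h) v = a ∧
    Quotient.mk (orbSetoid σ h) w = b ∧ G.Adj v w
  symm := by
    constructor
    rintro a b ⟨hne, v, w, hv, hw, hadj⟩
    exact ⟨hne.symm, w, v, hw, hv, hadj.symm⟩
  loopless := by
    constructor
    rintro a ⟨hne, -⟩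
    exact hne rfl


open SimpleGraph

section Aux

variable {V : Type*} {G : SimpleGraph V}

/-- `getVert` of a mapped walk. -/
lemma walk_getVert_map {W : Type*} {G' : SimpleGraph W} (f : G →g G')
    {u v : V} (p : G.Walk u v) (i : ℕ) :
    (p.map f).getVert i = f (p.getVert i) := by
  induction p generalizing i with
  | nil => simp [SimpleGraph.Walk.getVert]
  | cons h p ih =>
    cases i with
    | zero => simp
    | succ n => simpa [SimpleGraph.Walk.getVert_cons_succ] using ih n

/-- `getVert` is injective on a path. -/
lemma path_getVert_inj {u v : V} {p : G.Walk u v} (hp : p.IsPath) :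
    ∀ i j, i ≤ p.length → j ≤ p.length → p.getVert i = p.getVert j → i = j := by
  induction p with
  | nil => intro i j hi hj _; simp [SimpleGraph.Walk.length_nil] at hi hj; omega
  | cons h p ih =>
    rw [SimpleGraph.Walk.cons_isPath_iff] at hp
    intro i j hi hj hij
    match i, j with
    | 0, 0 => rfl
    | 0, (j+1) =>
      exfalso
      apply hp.2
      rw [SimpleGraph.Walk.mem_support_iff_exists_getVert]
      refine ⟨j, ?_, by simpa using hj⟩
      simpa [SimpleGraph.Walk.getVert_cons_succ] using hij.symm
    | (i+1), 0 =>
      exfalso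
      apply hp.2
      rw [SimpleGraph.Walk.mem_support_iff_exists_getVert]
      refine ⟨i, ?_, by simpa using hi⟩
      simpa [SimpleGraph.Walk.getVert_cons_succ] using hij
    | (i+1), (j+1) =>
      have := ih hp.1 i j (by simpa using hi) (by simpa using hj)
        (by simpa [SimpleGraph.Walk.getVert_cons_succ] using hij)
      omega

variable (σ : V → V) (h : ∀ v, σ (σ v) = v)

lemma orb_eq (u x : V) :
    Quotient.mk (orbSetoid σ h) u = Quotient.mk (orbSetoid σ h) x ↔ (x = u ∨ x = σ u) :=
  ⟨fun hq => Quotient.exact hq, fun hr => Quotient.sound hr⟩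

lemma orb_sigma (u : V) :
    Quotient.mk (orbSetoid σ h) (σ u) = Quotient.mk (orbSetoid σ h) u :=
  (orb_eq σ h (σ u) u).mpr (Or.inr (h u).symm)

end Aux

section Main

variable {V : Type*} {G : SimpleGraph V} (σ : G ≃g G) (h2 : ∀ v, σ (σ v) = v)

lemma quot_reachable {v w : V} (p : G.Walk v w) :
    (quotGraph G (fun v => σ v) h2).Reachable
      (Quotient.mk (orbSetoid (fun v => σ v) h2) v)
      (Quotient.mk (orbSetoid (fun v => σ v) h2) w) := by
  induction p with
  | nil => rfl
  | @cons u u' w hadj p ih =>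
    by_cases hq : Quotient.mk (orbSetoid (fun v => σ v) h2) u
        = Quotient.mk (orbSetoid (fun v => σ v) h2) u'
    · rw [hq]; exact ih
    · have hQadj : (quotGraph G (fun v => σ v) h2).Adj
          (Quotient.mk (orbSetoid (fun v => σ v) h2) u)
          (Quotient.mk (orbSetoid (fun v => σ v) h2) u') := by
        exact ⟨hq, u, u', rfl, rfl, hadj⟩
      exact hQadj.reachable.trans ih

lemma quot_lift {a b : Quotient (orbSetoid (fun v => σ v) h2)}
    (p : (quotGraph G (fun v => σ v) h2).Walk a b) :
    ∀ v, Quotient.mk (orbSetoid (fun v => σ v) h2) v = a →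
      ∃ w, ∃ q : G.Walk v w, Quotient.mk (orbSetoid (fun v => σ v) h2) w = b ∧
        q.length = p.length ∧
        (∀ i, Quotient.mk (orbSetoid (fun v => σ v) h2) (q.getVert i) = p.getVert i) ∧
        q.support.map (Quotient.mk (orbSetoid (fun v => σ v) h2)) = p.support := by
  induction p with
  | nil =>
    intro v hv
    subst hv
    refine ⟨v, SimpleGraph.Walk.nil, rfl, rfl, fun i => ?_, by simp⟩
    rw [SimpleGraph.Walk.getVert_of_length_le _ (by simp),
      SimpleGraph.Walk.getVert_of_length_le _ (by simp)]
  | @cons a a' b hadj p ih =>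
    intro v hv
    obtain ⟨hne, x, y, hx, hy, hxy⟩ := hadj
    have hvx : x = v ∨ x = σ v := (orb_eq (fun v => σ v) h2 v x).mp (hv.trans hx.symm)
    have step : ∃ y', G.Adj v y' ∧ Quotient.mk (orbSetoid (fun v => σ v) h2) y' = a' := by
      rcases hvx with hvx | hvx
      · exact ⟨y, hvx ▸ hxy, hy⟩
      · refine ⟨σ y, ?_, (orb_sigma (fun v => σ v) h2 y).trans hy⟩
        have : G.Adj (σ (σ v)) (σ y) := σ.map_adj_iff.mpr (hvx ▸ hxy)
        rwa [h2 v] at this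
    obtain ⟨y', hady', hy'⟩ := step
    obtain ⟨w, q, hw, hlen, hget, hsup⟩ := ih y' hy'
    refine ⟨w, SimpleGraph.Walk.cons hady' q, hw, by exact congrArg (· + 1) hlen, fun i => ?_, by
      exact congrArg₂ List.cons hv hsup⟩
    cases i with
    | zero => simpa using hv
    | succ n => exact hget n

end Main


/-- let T be a finite tree and σ an automorphism with σ² = id fixing
at least one vertex.  Then the quotient graph T/⟨σ⟩ is a tree. -/
theorem stmt_18 {V : Type*} [Fintype V] (G : SimpleGraph V) (hT : G.IsTree)
    (σ : G ≃g G) (h2 : ∀ v, σ (σ v) = v)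
    (hfix : ∃ v, σ v = v) :
    (quotGraph G (fun v => σ v) h2).IsTree := by
  classical
  constructor
  · -- connected
    rw [SimpleGraph.connected_iff]
    constructor
    · intro a b
      obtain ⟨v, hv⟩ := a.exists_rep
      obtain ⟨w, hw⟩ := b.exists_rep
      obtain ⟨p⟩ := hT.isConnected.preconnected v w
      rw [← hv, ← hw]
      exact quot_reachable σ h2 p
    · obtain ⟨v⟩ := hT.isConnected.nonempty
      exact ⟨Quotient.mk _ v⟩
  · intro a c hc
    obtain ⟨v, hv⟩ := a.exists_rep
    obtain ⟨w, q, hw, hlen, hget, hsup⟩ := quot_lift σ h2 c v hv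
    have hn3 : 3 ≤ c.length := hc.three_le_length
    have hwv : w = v ∨ w = σ v := (orb_eq (fun v => σ v) h2 v w).mp (hv.trans hw.symm)
    cases c with
    | nil => simp at hn3
    | @cons _ b1 _ hadjc c1 =>
      have hc1 : c1.IsPath := SimpleGraph.Walk.IsPath.mk' (by
        have := hc.support_nodup
        rwa [SimpleGraph.Walk.support_cons, List.tail_cons] at this)
      cases q with
      | nil => simp at hlen
      | @cons _ v1 _ hadjq q1 =>
        have hq1sup : q1.support.map (Quotient.mk (orbSetoid (fun v => σ v) h2))
            = c1.support := by
          have := hsup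
          simp only [SimpleGraph.Walk.support_cons, List.map_cons, List.cons.injEq] at this
          exact this.2
        have hq1nodup : q1.support.Nodup := by
          have : (q1.support.map (Quotient.mk (orbSetoid (fun v => σ v) h2))).Nodup := by
            rw [hq1sup]; exact hc1.support_nodup
          exact this.of_map
        have hq1path : q1.IsPath := SimpleGraph.Walk.IsPath.mk' hq1nodup
        have hlen' : q1.length + 1 = c1.length + 1 := by simpa using hlen
        have hn3' : 3 ≤ c1.length + 1 := by simpa using hn3
        by_cases hcase : w = v
        · -- closed lift: q1 and the single edge give two distinct paths
          subst hcase
          obtain ⟨p0, -, hu⟩ := hT.existsUnique_path v1 w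
          have heq : q1 = (SimpleGraph.Path.singleton hadjq.symm : G.Walk v1 w) :=
            (hu q1 hq1path).trans (hu _ (SimpleGraph.Path.singleton hadjq.symm).2).symm
          have : q1.length = 1 := by rw [heq]; simp [SimpleGraph.Path.singleton]
          omega
        · have hws : w = σ v := hwv.resolve_left hcase
          have hπw : Quotient.mk (orbSetoid (fun v => σ v) h2) w
              = Quotient.mk (orbSetoid (fun v => σ v) h2) v := hw.trans hv.symm
          have hvnot : v ∉ q1.support := by
            intro hmem
            have hwmem : w ∈ q1.support := SimpleGraph.Walk.end_mem_support q1
            have hnodupmap :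
                (q1.support.map (Quotient.mk (orbSetoid (fun v => σ v) h2))).Nodup := by
              rw [hq1sup]; exact hc1.support_nodup
            exact hcase (List.inj_on_of_nodup_map hnodupmap hwmem hmem hπw)
          have qpath : (SimpleGraph.Walk.cons hadjq q1).IsPath :=
            (SimpleGraph.Walk.cons_isPath_iff hadjq q1).mpr ⟨hq1path, hvnot⟩
          have hfv : σ.toHom v = w := hws.symm
          have hfw : σ.toHom w = v := by rw [hws]; exact h2 v
          set q : G.Walk v w := SimpleGraph.Walk.cons hadjq q1 with hqdef
          have mqpath : ((q.map σ.toHom).copy hfv hfw).IsPath := by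
            rw [SimpleGraph.Walk.isPath_copy]
            exact SimpleGraph.Walk.map_isPath_of_injective
              (fun x y hxy => σ.toEquiv.injective hxy) qpath
          obtain ⟨p0, -, hu⟩ := hT.existsUnique_path w v
          have heq : (q.map σ.toHom).copy hfv hfw = q.reverse :=
            (hu _ mqpath).trans (hu _ qpath.reverse).symm
          have h1 : ((q.map σ.toHom).copy hfv hfw).getVert 1 = q.reverse.getVert 1 := by
            rw [heq]
          rw [SimpleGraph.Walk.getVert_copy, walk_getVert_map, SimpleGraph.Walk.getVert_reverse]
            at h1
          -- h1 : σ (q.getVert 1) = q.getVert (q.length - 1)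
          have hπ1 : Quotient.mk (orbSetoid (fun v => σ v) h2) (q.getVert 1)
              = Quotient.mk (orbSetoid (fun v => σ v) h2) (q.getVert (q.length - 1)) := by
            rw [← h1]
            exact (orb_sigma (fun v => σ v) h2 (q.getVert 1)).symm
          have hc11 : (SimpleGraph.Walk.cons hadjc c1).getVert 1
              = (SimpleGraph.Walk.cons hadjc c1).getVert (q.length - 1) := by
            rw [← hget 1, ← hget (q.length - 1), hπ1]
          have hqlen : q.length = c1.length + 1 := by
            rw [hqdef]; simpa using hlen'
          have hm2 : 2 ≤ c1.length := by omega
          have e1 : (SimpleGraph.Walk.cons hadjc c1).getVert 1 = c1.getVert 0 :=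
            SimpleGraph.Walk.getVert_cons_succ c1 hadjc
          have e2 : (SimpleGraph.Walk.cons hadjc c1).getVert (q.length - 1)
              = c1.getVert (c1.length - 1) := by
            have : q.length - 1 = (c1.length - 1) + 1 := by omega
            rw [this]
            exact SimpleGraph.Walk.getVert_cons_succ c1 hadjc
          have : (0 : ℕ) = c1.length - 1 :=
            path_getVert_inj hc1 0 (c1.length - 1) (Nat.zero_le _) (by omega)
              (by rw [← e1, ← e2, hc11])
          omega
end
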